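/- Suppose a sequence of effects T_n on (ℂ^A)^{⊗n} satisfies M_n · P_m T_n P_m ≤ P_m for every block m of a partition {I_m}_{m∈[M_n]} of the incoherent basis labels into M_n disjoint subalphabets (P_m the projection onto span{|a⟩ : a ∈ I_m}). If T_n = Σ_c |w_c⟩⟨w_c| is any decomposition into (unnormalized) pure components, then the operators K_c := √M_n Σ_m |m⟩⟨w_c| P_m satisfy Σ_c K_c† K_c = M_n Σ_m P_m T_n P_m ≤ 1, so that F(X) := Σ_c K_c X K_c† is a valid subchannel (completely positive, trace non-increasing); moreover each K_c is an incoherent (IO) Kraus operator. -/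
import Mathlib


open Matrix BigOperators ComplexOrder

/-- given an effect `T` on `(ℂ^A)^{⊗n}` satisfying
`M · P_m T P_m ≤ P_m` for every block `m` of a partition of the incoherent basis
labels (given as the fibers of `g`), any pure decomposition `T = ∑_c |w_c⟩⟨w_c|`
yields operators `K_c = √M ∑_m |m⟩⟨w_c| P_m` with
`∑_c K_c† K_c = M ∑_m P_m T P_m ≤ 1` (so they define a valid subchannel), and
each `K_c` is an incoherent (IO) Kraus operator. -/
theorem partition_pure_decomposition_gives_io_subchannel
    {A n Mn : ℕ} {C : Type} [Fintype C]
    (g : (Fin n → Fin A) → Fin Mn)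
    (P : Fin Mn → Matrix (Fin n → Fin A) (Fin n → Fin A) ℂ)
    (hP : ∀ m, P m = Matrix.diagonal (fun a => if g a = m then 1 else 0))
    (T : Matrix (Fin n → Fin A) (Fin n → Fin A) ℂ)
    (hTpsd : T.PosSemidef)
    (hTle1 : ((1 : Matrix (Fin n → Fin A) (Fin n → Fin A) ℂ) - T).PosSemidef)
    (hblock : ∀ m, (P m - (Mn : ℂ) • (P m * T * P m)).PosSemidef)
    (w : C → (Fin n → Fin A) → ℂ)
    (hT : T = ∑ c, Matrix.vecMulVec (w c) (star (w c)))
    (K : C → Matrix (Fin Mn) (Fin n → Fin A) ℂ)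
    (hK : ∀ c m a, K c m a =
      (Real.sqrt Mn : ℂ) * star (w c a) * (if g a = m then 1 else 0)) :
    (∑ c, (K c)ᴴ * K c) = (Mn : ℂ) • ∑ m, P m * T * P m ∧
    ((1 : Matrix (Fin n → Fin A) (Fin n → Fin A) ℂ) - ∑ c, (K c)ᴴ * K c).PosSemidef ∧
    (∀ c a m, m ≠ g a → K c m a = 0) := by
  have key : (∑ c, (K c)ᴴ * K c) = (Mn : ℂ) • ∑ m, P m * T * P m := by
    ext a b
    simp only [Matrix.sum_apply, Matrix.mul_apply, Matrix.conjTranspose_apply,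
      Matrix.smul_apply, hK, hP, hT, Matrix.diagonal_apply, Matrix.vecMulVec_apply,
      Pi.star_apply, smul_eq_mul]
    simp only [mul_ite, ite_mul, zero_mul, mul_zero, mul_one, one_mul,
      Finset.sum_ite_eq, Finset.sum_ite_eq', Finset.mem_univ, if_true,
      star_mul', star_star,
      Complex.star_def, Complex.conj_ofReal, Finset.mul_sum, Finset.sum_ite_irrel,
      Finset.sum_const_zero]
    have hs : ((Real.sqrt Mn : ℝ) : ℂ) * ((Real.sqrt Mn : ℝ) : ℂ) = (Mn : ℂ) := by
      rw [← Complex.ofReal_mul, Real.mul_self_sqrt (Nat.cast_nonneg _)]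
      norm_cast
    by_cases h : g a = g b
    · simp only [h, if_true, _root_.map_mul, Complex.conj_conj, Complex.conj_ofReal]
      refine Finset.sum_congr rfl fun c _ => ?_
      linear_combination (w c a * (starRingEnd ℂ) (w c b)) * hs
    · simp [h]
  refine ⟨key, ?_, ?_⟩
  · rw [key]
    have hone : (1 : Matrix (Fin n → Fin A) (Fin n → Fin A) ℂ) = ∑ m, P m := by
      ext a b
      by_cases hab : a = b <;> simp [hP, hab, Matrix.one_apply, Matrix.sum_apply, Matrix.diagonal_apply, Finset.sum_ite_eq]
    rw [hone, Finset.smul_sum, ← Finset.sum_sub_distrib]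
    exact Finset.sum_induction _ _ (fun a b ha hb => ha.add hb)
      Matrix.PosSemidef.zero (fun m _ => hblock m)
  · intro c a m hm
    rw [hK, if_neg (by exact fun h => hm h.symm), mul_zero]
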